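/- Let n ∈ ℕ, let x, y ∈ ℝ^n with x ≠ y, let θ = ‖x − y‖₂, and let r > 0. Let a ∈ ℝ^n have entries drawn independently from the standard normal distribution N(0,1), and let b be uniform on [0, r], independent of a. Then the probability that ⌊(a·x + b)/r⌋ = ⌊(a·y + b)/r⌋ equals ε(θ) = 1 − 2·Φ(−r/θ) − (2θ/(√(2π)·r)) · (1 − e^{−r²/(2θ²)}), where Φ is the cumulative distribution function of the standard normal distribution N(0,1). -/

import Mathlib

open MeasureTheory ProbabilityTheory

/-- The cumulative distribution function `Φ` of the standard normal
distribution `N(0, 1)`. -/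
noncomputable def stdNormalCDF (x : ℝ) : ℝ :=
  ((ProbabilityTheory.gaussianReal 0 1) (Set.Iic x)).toReal

/-- The collision probability `ε(θ)` of a single p-stable LSH hash of two
points at Euclidean distance `θ`, with bucket width `r`. -/
noncomputable def collisionProb (r θ : ℝ) : ℝ :=
  1 - 2 * stdNormalCDF (-r / θ)
    - (2 * θ / (Real.sqrt (2 * Real.pi) * r)) * (1 - Real.exp (-r ^ 2 / (2 * θ ^ 2)))

open Set Real

lemma floorSet_measurable (r u v : ℝ) :
    MeasurableSet {b : ℝ | ⌊(u + b) / r⌋ = ⌊(v + b) / r⌋} := by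
  have h1 : Measurable fun b : ℝ => ⌊(u + b) / r⌋ :=
    (measurable_const.add measurable_id).div_const r |>.floor
  have h2 : Measurable fun b : ℝ => ⌊(v + b) / r⌋ :=
    (measurable_const.add measurable_id).div_const r |>.floor
  have : {b : ℝ | ⌊(u + b) / r⌋ = ⌊(v + b) / r⌋}
      = ⋃ m : ℤ, ((fun b : ℝ => ⌊(u + b) / r⌋) ⁻¹' {m}) ∩ ((fun b : ℝ => ⌊(v + b) / r⌋) ⁻¹' {m}) := by
    ext b; simp only [mem_setOf_eq, mem_iUnion, mem_inter_iff, mem_preimage, mem_singleton_iff]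
    constructor
    · intro h; exact ⟨_, rfl, h.symm⟩
    · rintro ⟨m, h1, h2⟩; rw [h1, h2]
  rw [this]
  exact MeasurableSet.iUnion fun m => (h1 (measurableSet_singleton m)).inter (h2 (measurableSet_singleton m))

lemma volume_floorSet_aux {r : ℝ} (hr : 0 < r) {u v : ℝ} (huv : u ≤ v) :
    volume ({b : ℝ | ⌊(u + b) / r⌋ = ⌊(v + b) / r⌋} ∩ Icc 0 r)
      = ENNReal.ofReal (max 0 (r - (v - u))) := by
  set t := v - u with ht
  have ht0 : 0 ≤ t := sub_nonneg.2 huv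
  set k : ℤ := ⌊u / r⌋ + 1 with hk
  set β : ℝ := k * r - u with hβ
  have hβ0 : 0 < β := by
    have := Int.lt_floor_add_one (u / r)
    have : u / r < (k : ℝ) := by push_cast [hk]; linarith
    have : u < k * r := by
      rw [div_lt_iff₀ hr] at this; linarith
    simp [hβ]; linarith
  have hβr : β ≤ r := by
    have h1 : ((k : ℝ) - 1) ≤ u / r := by
      have := Int.floor_le (u / r); push_cast [hk]; linarith
    have h2 : ((k : ℝ) - 1) * r ≤ u := (le_div_iff₀ hr).1 h1
    simp only [hβ]; nlinarith
  -- replace Icc by Ico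
  have hae : ({b : ℝ | ⌊(u + b) / r⌋ = ⌊(v + b) / r⌋} ∩ Icc 0 r : Set ℝ)
      =ᵐ[volume] ({b : ℝ | ⌊(u + b) / r⌋ = ⌊(v + b) / r⌋} ∩ Ico 0 r : Set ℝ) :=
    ae_eq_set_inter (Filter.EventuallyEq.refl _ _) Ico_ae_eq_Icc.symm
  rw [measure_congr hae]
  have hset : ({b : ℝ | ⌊(u + b) / r⌋ = ⌊(v + b) / r⌋} ∩ Ico 0 r : Set ℝ)
      = Ico 0 (β - t) ∪ Ico β (min r (r + β - t)) := by
    ext b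
    simp only [mem_inter_iff, mem_setOf_eq, mem_Ico, mem_union, lt_min_iff]
    constructor
    · rintro ⟨hfl, hb0, hbr⟩
      rcases lt_or_ge b β with hbβ | hbβ
      · left
        refine ⟨hb0, ?_⟩
        have hfu : ⌊(u + b) / r⌋ = k - 1 := by
          rw [Int.floor_eq_iff]
          constructor
          · push_cast
            rw [le_div_iff₀ hr]
            have : ((k : ℝ) - 1) * r ≤ u := by nlinarith [hβr]
            linarith
          · push_cast
            rw [div_lt_iff₀ hr]
            have : u + b < u + β := by linarith
            have : u + β = k * r := by rw [hβ]; ring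
            linarith
        have hfv : ⌊(v + b) / r⌋ = k - 1 := by rw [← hfl, hfu]
        rw [Int.floor_eq_iff] at hfv
        obtain ⟨_, h2⟩ := hfv
        push_cast at h2
        rw [div_lt_iff₀ hr] at h2
        have : v + b < k * r := by linarith
        simp [hβ, ht]; linarith
      · right
        refine ⟨hbβ, hbr, ?_⟩
        have hfu : ⌊(u + b) / r⌋ = k := by
          rw [Int.floor_eq_iff]
          constructor
          · rw [le_div_iff₀ hr]
            have : u + β = k * r := by rw [hβ]; ring
            linarith
          · push_cast
            rw [div_lt_iff₀ hr]
            have : u < k * r := by linarith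
            linarith
        have hfv : ⌊(v + b) / r⌋ = k := by rw [← hfl, hfu]
        rw [Int.floor_eq_iff] at hfv
        obtain ⟨_, h2⟩ := hfv
        push_cast at h2
        rw [div_lt_iff₀ hr] at h2
        linarith
    · rintro (⟨hb0, hbt⟩ | ⟨hbβ, hbr, hbt⟩)
      · have hbβ : b < β := by linarith
        have hfu : ⌊(u + b) / r⌋ = k - 1 := by
          rw [Int.floor_eq_iff]
          constructor
          · push_cast
            rw [le_div_iff₀ hr]
            have : ((k : ℝ) - 1) * r ≤ u := by nlinarith [hβr]
            linarith
          · push_cast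
            rw [div_lt_iff₀ hr]
            have : u + β = k * r := by rw [hβ]; ring
            linarith
        have hfv : ⌊(v + b) / r⌋ = k - 1 := by
          rw [Int.floor_eq_iff]
          constructor
          · push_cast
            rw [le_div_iff₀ hr]
            have : ((k : ℝ) - 1) * r ≤ u := by nlinarith [hβr]
            linarith
          · push_cast
            rw [div_lt_iff₀ hr]
            have : v + b < k * r := by simp [hβ, ht] at hbt ⊢; linarith
            linarith
        refine ⟨by rw [hfu, hfv], hb0, by linarith⟩
      · have hfu : ⌊(u + b) / r⌋ = k := by
          rw [Int.floor_eq_iff]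
          constructor
          · rw [le_div_iff₀ hr]
            have : u + β = k * r := by rw [hβ]; ring
            linarith
          · push_cast
            rw [div_lt_iff₀ hr]
            have : u < k * r := by linarith
            linarith
        have hfv : ⌊(v + b) / r⌋ = k := by
          rw [Int.floor_eq_iff]
          constructor
          · rw [le_div_iff₀ hr]
            have : u + β = k * r := by rw [hβ]; ring
            linarith
          · push_cast
            rw [div_lt_iff₀ hr]
            linarith
        exact ⟨by rw [hfu, hfv], by linarith, by linarith⟩
  rw [hset]
  have hdisj : Disjoint (Ico (0:ℝ) (β - t)) (Ico β (min r (r + β - t))) := by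
    apply Set.disjoint_left.2
    rintro b ⟨_, h1⟩ ⟨h2, _⟩
    linarith
  rw [measure_union hdisj measurableSet_Ico, Real.volume_Ico, Real.volume_Ico]
  rcases le_total t β with htβ | htβ
  · have h1 : min r (r + β - t) = r := min_eq_left (by linarith)
    rw [h1, ← ENNReal.ofReal_add (by linarith) (by linarith)]
    congr 1
    rw [max_eq_right (by linarith)]
    ring
  · rcases le_total t r with htr | htr
    · have h1 : min r (r + β - t) = r + β - t := min_eq_right (by linarith)
      rw [h1, ENNReal.ofReal_of_nonpos (by linarith), zero_add]
      congr 1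
      rw [max_eq_right (by linarith)]
      ring
    · have h1 : min r (r + β - t) = r + β - t := min_eq_right (by linarith)
      rw [h1, ENNReal.ofReal_of_nonpos (by linarith),
        ENNReal.ofReal_of_nonpos (by linarith), max_eq_left (by linarith)]
      simp


lemma cond_floorSet {r : ℝ} (hr : 0 < r) (u v : ℝ) :
    (ProbabilityTheory.cond volume (Set.Icc 0 r)) {b : ℝ | ⌊(u + b) / r⌋ = ⌊(v + b) / r⌋}
      = ENNReal.ofReal (max 0 (1 - |u - v| / r)) := by
  have key : ∀ u v : ℝ, u ≤ v →
      (ProbabilityTheory.cond volume (Set.Icc 0 r)) {b : ℝ | ⌊(u + b) / r⌋ = ⌊(v + b) / r⌋}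
        = ENNReal.ofReal (max 0 (1 - (v - u) / r)) := by
    intro u v huv
    rw [ProbabilityTheory.cond_apply measurableSet_Icc, Set.inter_comm,
      volume_floorSet_aux hr huv, Real.volume_Icc, sub_zero,
      ← ENNReal.ofReal_inv_of_pos hr, ← ENNReal.ofReal_mul (by positivity)]
    congr 1
    rcases le_total (v - u) r with h | h
    · rw [max_eq_right (by linarith), max_eq_right]
      · field_simp
      · rw [sub_nonneg, div_le_one hr]; linarith
    · rw [max_eq_left (by linarith), max_eq_left, mul_zero]
      rw [sub_nonpos, le_div_iff₀ hr, one_mul]; linarith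
  rcases le_total u v with h | h
  · rw [key u v h, abs_sub_comm, abs_of_nonneg (sub_nonneg.2 h)]
  · have hswap : {b : ℝ | ⌊(u + b) / r⌋ = ⌊(v + b) / r⌋}
        = {b : ℝ | ⌊(v + b) / r⌋ = ⌊(u + b) / r⌋} := by
      ext b; exact eq_comm
    rw [hswap, key v u h, abs_of_nonneg (sub_nonneg.2 h)]

lemma lintegral_pi_prod_fin : ∀ (n : ℕ) (μ : Fin n → Measure ℝ), (∀ i, SigmaFinite (μ i)) →
    ∀ (f : Fin n → ℝ → ENNReal), (∀ i, Measurable (f i)) →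
    ∫⁻ a, ∏ i, f i (a i) ∂Measure.pi μ = ∏ i, ∫⁻ x, f i x ∂μ i := by
  intro n
  induction n with
  | zero =>
    intro μ _ f _
    simp only [Finset.univ_eq_empty, Finset.prod_empty, lintegral_one]
    rw [Measure.pi_univ]
    simp
  | succ n ih =>
    intro μ hμ f hf
    haveI : ∀ i, SigmaFinite (μ i) := hμ
    have hmp := measurePreserving_piFinSuccAbove μ 0
    set e := MeasurableEquiv.piFinSuccAbove (fun _ : Fin (n + 1) => ℝ) 0 with he
    set G : ℝ × (Fin n → ℝ) → ENNReal :=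
      fun p => f 0 p.1 * ∏ j, f (Fin.succ j) (p.2 j) with hG
    have hGmeas : Measurable G := by
      apply Measurable.mul
      · exact (hf 0).comp measurable_fst
      · exact Finset.measurable_prod _ fun j _ =>
          (hf (Fin.succ j)).comp ((measurable_pi_apply j).comp measurable_snd)
    have hfa : ∀ a : Fin (n + 1) → ℝ, ∏ i, f i (a i) = G (e a) := by
      intro a
      rw [Fin.prod_univ_succ]
      simp [hG, he, MeasurableEquiv.piFinSuccAbove_apply, Fin.removeNth, Fin.tail]
    calc ∫⁻ a, ∏ i, f i (a i) ∂Measure.pi μ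
        = ∫⁻ a, G (e a) ∂Measure.pi μ := by simp_rw [hfa]
      _ = ∫⁻ p, G p ∂((μ 0).prod (Measure.pi fun j => μ ((0 : Fin (n+1)).succAbove j))) := by
          rw [← hmp.map_eq, lintegral_map hGmeas e.measurable]
      _ = (∫⁻ x, f 0 x ∂μ 0) * ∫⁻ w, ∏ j, f (Fin.succ j) (w j)
            ∂(Measure.pi fun j => μ ((0 : Fin (n+1)).succAbove j)) := by
          exact lintegral_prod_mul ((hf 0).aemeasurable)
            ((Finset.measurable_prod _ fun j _ =>
              (hf (Fin.succ j)).comp (measurable_pi_apply j)).aemeasurable)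
      _ = ∏ i, ∫⁻ x, f i x ∂μ i := by
          rw [Fin.prod_univ_succ]
          congr 1
          simpa using ih (fun j => μ ((0 : Fin (n+1)).succAbove j))
            (fun j => hμ _) (fun j => f (Fin.succ j)) (fun j => hf _)

lemma map_eval_pi {n : ℕ} (μ : Fin n → Measure ℝ) [∀ i, IsProbabilityMeasure (μ i)]
    (i : Fin n) : (Measure.pi μ).map (fun a => a i) = μ i := by
  ext s hs
  rw [Measure.map_apply (measurable_pi_apply i) hs]
  classical
  have : (fun a : Fin n → ℝ => a i) ⁻¹' s
      = Set.pi Set.univ (Function.update (fun _ => Set.univ) i s) := Set.eval_preimage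
  rw [this, Measure.pi_pi]
  rw [Finset.prod_eq_single i]
  · simp
  · intro j _ hj
    simp [Function.update_of_ne hj]
  · simp

lemma ofReal_finset_prod {ι : Type*} (s : Finset ι) (f : ι → ℝ) (hf : ∀ i ∈ s, 0 ≤ f i) :
    ENNReal.ofReal (∏ i ∈ s, f i) = ∏ i ∈ s, ENNReal.ofReal (f i) := by
  classical
  induction s using Finset.induction_on with
  | empty => simp
  | @insert a s ha ih =>
    rw [Finset.prod_insert ha, Finset.prod_insert ha,
      ENNReal.ofReal_mul (hf a (Finset.mem_insert_self a s)),
      ih fun i hi => hf i (Finset.mem_insert_of_mem hi)]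

noncomputable def gaussDensity (n : ℕ) : (Fin n → ℝ) → ENNReal :=
  fun a => ENNReal.ofReal ((Real.sqrt (2 * π))⁻¹ ^ n * Real.exp (-(∑ i, a i ^ 2) / 2))

lemma prod_gaussianPDF_eq {n : ℕ} (a : Fin n → ℝ) :
    ∏ i, gaussianPDF 0 1 (a i) = gaussDensity n a := by
  simp only [gaussianPDF, gaussDensity]
  rw [← ofReal_finset_prod _ _ fun i _ => gaussianPDFReal_nonneg 0 1 (a i)]
  congr 1
  simp only [gaussianPDFReal]
  rw [Finset.prod_mul_distrib, Finset.prod_const, ← Real.exp_sum]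
  congr 1
  · norm_num
  · rw [← Finset.sum_div, ← Finset.sum_neg_distrib]
    norm_num

lemma gaussDensity_measurable (n : ℕ) : Measurable (gaussDensity n) := by
  apply Measurable.ennreal_ofReal
  apply Measurable.const_mul
  apply Real.measurable_exp.comp
  apply Measurable.div_const
  apply Measurable.neg
  exact Finset.measurable_sum _ fun i _ => (measurable_pi_apply i).pow_const 2

lemma pi_gaussian_eq_withDensity (n : ℕ) :
    (Measure.pi fun _ : Fin n => gaussianReal 0 1)
      = (volume : Measure (Fin n → ℝ)).withDensity (gaussDensity n) := by
  apply Measure.pi_eq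
  intro s hs
  rw [withDensity_apply _ (MeasurableSet.univ_pi hs),
    ← lintegral_indicator (MeasurableSet.univ_pi hs) _]
  have hind : (Set.pi Set.univ s).indicator (gaussDensity n)
      = fun a => ∏ i, (s i).indicator (gaussianPDF 0 1) (a i) := by
    funext a
    by_cases ha : a ∈ Set.pi Set.univ s
    · rw [Set.indicator_of_mem ha, ← prod_gaussianPDF_eq]
      exact Finset.prod_congr rfl fun i _ =>
        (Set.indicator_of_mem (ha i (Set.mem_univ i)) _).symm
    · rw [Set.indicator_of_notMem ha]
      rw [Set.mem_univ_pi] at ha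
      push_neg at ha
      obtain ⟨i, hi⟩ := ha
      symm
      apply Finset.prod_eq_zero (Finset.mem_univ i)
      rw [Set.indicator_of_notMem hi]
  rw [hind, volume_pi,
    lintegral_pi_prod_fin n _ (fun i => inferInstance) _
      (fun i => (measurable_gaussianPDF 0 1).indicator (hs i))]
  refine Finset.prod_congr rfl fun i _ => ?_
  rw [lintegral_indicator (hs i) _]
  exact (gaussianReal_apply 0 one_ne_zero (s i)).symm

lemma map_sum_mul_pi_gaussian {n : ℕ} (c : Fin n → ℝ) (hc : c ≠ 0) (θ : ℝ)
    (hθ : θ = Real.sqrt (∑ i, c i ^ 2)) :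
    (Measure.pi fun _ : Fin n => gaussianReal 0 1).map (fun a => ∑ i, a i * c i)
      = gaussianReal 0 ⟨θ ^ 2, sq_nonneg θ⟩ := by
  have hsum : 0 < ∑ i, c i ^ 2 := by
    obtain ⟨i, hi⟩ : ∃ i, c i ≠ 0 := by
      by_contra h; push_neg at h; exact hc (funext h)
    exact Finset.sum_pos' (fun j _ => sq_nonneg _) ⟨i, Finset.mem_univ i, by positivity⟩
  have hθpos : 0 < θ := hθ ▸ Real.sqrt_pos.2 hsum
  have hθ2 : θ ^ 2 = ∑ i, c i ^ 2 := by rw [hθ]; exact Real.sq_sqrt hsum.le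
  have hnpos : 0 < n := by
    rcases Nat.eq_zero_or_pos n with h | h
    · subst h; exact absurd (Subsingleton.elim c 0) hc
    · exact h
  set i0 : Fin n := ⟨0, hnpos⟩ with hi0
  set u : EuclideanSpace ℝ (Fin n) := (WithLp.equiv 2 (Fin n → ℝ)).symm (fun i => c i / θ)
    with hu
  have hui : ∀ i, u i = c i / θ := fun i => rfl
  have hnormsq : ∀ z : EuclideanSpace ℝ (Fin n), ‖z‖ ^ 2 = ∑ i, z i ^ 2 := by
    intro z
    rw [EuclideanSpace.norm_eq, Real.sq_sqrt (by positivity)]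
    simp [Real.norm_eq_abs, sq_abs]
  have hnorm : ‖u‖ = 1 := by
    have h2 : ‖u‖ ^ 2 = 1 := by
      rw [hnormsq]
      simp_rw [hui, div_pow, ← Finset.sum_div, ← hθ2]
      exact div_self (by positivity)
    nlinarith [norm_nonneg u]
  have horth : Orthonormal ℝ (Set.restrict {i0} (fun _ : Fin n => u)) := by
    constructor
    · intro i; exact hnorm
    · intro i j hij
      exfalso
      apply hij
      apply Subtype.ext
      have hi := i.2; have hj := j.2
      simp only [Set.mem_singleton_iff] at hi hj
      rw [hi, hj]
  obtain ⟨b, hb⟩ := horth.exists_orthonormalBasis_extension_of_card_eq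
    (by simp [finrank_euclideanSpace])
  have hbi0 : b i0 = u := hb i0 rfl
  set e := (MeasurableEquiv.toLp 2 (Fin n → ℝ)).symm with he
  set T : (Fin n → ℝ) ≃ᵐ (Fin n → ℝ) :=
    e.symm.trans ((b.repr.toHomeomorph.toMeasurableEquiv).trans e) with hT
  have hTcoe : ∀ a, T a = e (b.repr (e.symm a)) := fun a => rfl
  have hTpres : MeasurePreserving (⇑T) (volume : Measure (Fin n → ℝ)) volume := by
    have h1 := (EuclideanSpace.volume_preserving_symm_measurableEquiv_toLp (Fin n)).symm
    have h2 := b.repr.measurePreserving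
    have h3 := EuclideanSpace.volume_preserving_symm_measurableEquiv_toLp (Fin n)
    exact h3.comp (h2.comp h1)
  have hD : ∀ a, gaussDensity n (T a) = gaussDensity n a := by
    intro a
    have key : ∑ i, (T a) i ^ 2 = ∑ i, a i ^ 2 := by
      have h1 : ∑ i, (T a) i ^ 2 = ‖b.repr (e.symm a)‖ ^ 2 := (hnormsq _).symm
      have h2 : ‖b.repr (e.symm a)‖ = ‖e.symm a‖ := b.repr.norm_map _
      have h3 : ‖(e.symm a : EuclideanSpace ℝ (Fin n))‖ ^ 2 = ∑ i, a i ^ 2 := hnormsq _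
      rw [h1, h2, h3]
    simp only [gaussDensity, key]
  have hinv : ((volume : Measure (Fin n → ℝ)).withDensity (gaussDensity n)).map T
      = (volume : Measure (Fin n → ℝ)).withDensity (gaussDensity n) := by
    ext s hs
    rw [Measure.map_apply T.measurable hs, withDensity_apply _ (T.measurable hs),
      withDensity_apply _ hs]
    have step : ∫⁻ y in s, gaussDensity n y ∂(volume : Measure (Fin n → ℝ))
        = ∫⁻ x in ⇑T ⁻¹' s, gaussDensity n (T x) ∂volume := by
      conv_lhs => rw [← hTpres.map_eq]
      exact setLIntegral_map hs (gaussDensity_measurable n) T.measurable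
    rw [step]
    simp_rw [hD]
  have hfeq : (fun a : Fin n → ℝ => ∑ i, a i * c i) = (θ * ·) ∘ (fun a => T a i0) := by
    funext a
    simp only [Function.comp_apply]
    have h1 : T a i0 = b.repr (e.symm a) i0 := rfl
    rw [h1, OrthonormalBasis.repr_apply_apply, hbi0]
    have h2 : (inner ℝ u (e.symm a) : ℝ) = ∑ i, (c i / θ) * a i := by
      rw [PiLp.inner_apply]
      refine Finset.sum_congr rfl fun i _ => ?_
      have hx : ((e.symm a : EuclideanSpace ℝ (Fin n)) i : ℝ) = a i := rfl
      rw [RCLike.inner_apply, conj_trivial, hui, hx, mul_comm]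
    rw [h2, Finset.mul_sum]
    exact Finset.sum_congr rfl fun i _ => by
      field_simp
  rw [hfeq, ← Measure.map_map (measurable_const_mul θ)
    (show Measurable (fun a : Fin n → ℝ => T a i0) from
      (measurable_pi_apply i0).comp T.measurable)]
  have : (Measure.pi fun _ : Fin n => gaussianReal 0 1).map (fun a => T a i0)
      = gaussianReal 0 1 := by
    rw [show (fun a : Fin n → ℝ => T a i0) = (fun w : Fin n → ℝ => w i0) ∘ ⇑T from rfl,
      ← Measure.map_map (measurable_pi_apply i0) T.measurable,
      pi_gaussian_eq_withDensity, hinv, ← pi_gaussian_eq_withDensity,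
      map_eval_pi]
  rw [this, gaussianReal_map_const_mul]
  congr 1
  · exact mul_zero θ
  · exact mul_one _

lemma stdNormal_Iic_symm (c : ℝ) :
    gaussianReal 0 1 (Set.Iic c) = 1 - gaussianReal 0 1 (Set.Iic (-c)) := by
  haveI : NullSingletonClass (gaussianReal 0 1) :=
    ⟨fun x => (gaussianReal_absolutelyContinuous 0 one_ne_zero) (volume_singleton)⟩
  have hneg : gaussianReal 0 1 (Set.Iic (-c)) = gaussianReal 0 1 (Set.Ici c) := by
    have hmap : (gaussianReal 0 1).map ((-1 : ℝ) * ·) = gaussianReal 0 1 := by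
      rw [gaussianReal_map_const_mul (-1 : ℝ)]
      congr 1
      · norm_num
      · apply NNReal.coe_injective
        push_cast
        norm_num
    conv_lhs => rw [← hmap]
    rw [Measure.map_apply (measurable_const_mul (-1 : ℝ)) measurableSet_Iic]
    congr 1
    ext t
    simp only [Set.mem_preimage, Set.mem_Iic, Set.mem_Ici]
    constructor
    · intro h; nlinarith
    · intro h; nlinarith
  rw [hneg, measure_congr (Ioi_ae_eq_Ici (μ := gaussianReal 0 1)).symm]
  rw [← Set.compl_Iic, measure_compl measurableSet_Iic (measure_ne_top _ _), measure_univ,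
    ENNReal.sub_sub_cancel ENNReal.one_ne_top prob_le_one]

lemma gaussian_lintegral_hat (r θ : ℝ) (hr : 0 < r) (hθ : 0 < θ) :
    ∫⁻ t, ENNReal.ofReal (max 0 (1 - |t| / r)) ∂(gaussianReal 0 ⟨θ ^ 2, sq_nonneg θ⟩)
      = ENNReal.ofReal (collisionProb r θ) := by
  set v : NNReal := ⟨θ ^ 2, sq_nonneg θ⟩ with hvdef
  have hvcoe : (v : ℝ) = θ ^ 2 := rfl
  have hv : v ≠ 0 := by
    intro h
    have h2 : (v : ℝ) = 0 := by rw [h]; simp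
    rw [hvcoe] at h2
    nlinarith
  set pdf : ℝ → ℝ := gaussianPDFReal 0 v with hpdfdef
  have hpdfcont : Continuous pdf := by
    rw [hpdfdef, gaussianPDFReal_def]
    fun_prop
  have hpdfnn : ∀ t, 0 ≤ pdf t := fun t => gaussianPDFReal_nonneg 0 v t
  have hpdf_eq : ∀ t, pdf t = (Real.sqrt (2 * π * θ ^ 2))⁻¹ * Real.exp (-t ^ 2 / (2 * θ ^ 2)) := by
    intro t
    rw [hpdfdef, gaussianPDFReal, hvcoe, sub_zero]
  have hpdf_even : ∀ t, pdf (-t) = pdf t := by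
    intro t
    rw [hpdf_eq, hpdf_eq, neg_sq]
  set g : ℝ → ℝ := fun t => max 0 (1 - |t| / r) with hgdef
  have hgmeas : Measurable g :=
    Measurable.max measurable_const (measurable_const.sub ((_root_.measurable_abs).div_const r))
  have hgbdd : ∀ t, ‖g t‖ ≤ 1 := by
    intro t
    rw [Real.norm_eq_abs, abs_of_nonneg (le_max_left _ _)]
    apply max_le (by norm_num)
    have : 0 ≤ |t| / r := by positivity
    linarith
  have hint : Integrable (fun t => g t * pdf t) volume :=
    (integrable_gaussianPDFReal 0 v).bdd_mul hgmeas.aestronglyMeasurable (Filter.Eventually.of_forall hgbdd)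
  -- step 1: reduce to a real integral
  have step1 : ∫⁻ t, ENNReal.ofReal (g t) ∂(gaussianReal 0 v)
      = ENNReal.ofReal (∫ t, g t * pdf t) := by
    rw [gaussianReal_of_var_ne_zero 0 hv,
      lintegral_withDensity_eq_lintegral_mul _ (measurable_gaussianPDF 0 v)
        hgmeas.ennreal_ofReal,
      ofReal_integral_eq_lintegral_ofReal hint
        (Filter.Eventually.of_forall fun t => mul_nonneg (le_max_left _ _) (hpdfnn t))]
    apply lintegral_congr
    intro t
    simp only [Pi.mul_apply, gaussianPDF]
    rw [← ENNReal.ofReal_mul (hpdfnn t), mul_comm]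
  rw [step1]
  congr 1
  -- step 2: restrict to the interval [-r, r]
  have hfun : (fun t => g t * pdf t)
      = (Set.Ioc (-r) r).indicator (fun t => pdf t * (1 - |t| / r)) := by
    funext t
    by_cases htm : t ∈ Set.Ioc (-r) r
    · rw [Set.indicator_of_mem htm]
      obtain ⟨h1, h2⟩ := htm
      have habs : |t| ≤ r := abs_le.2 ⟨h1.le, h2⟩
      have : g t = 1 - |t| / r := by
        rw [hgdef]
        apply max_eq_right
        rw [sub_nonneg, div_le_one hr]
        exact habs
      rw [this, mul_comm]
    · rw [Set.indicator_of_notMem htm]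
      have habs : r ≤ |t| := by
        simp only [Set.mem_Ioc, not_and_or, not_lt, not_le] at htm
        rcases htm with h | h
        · rw [abs_of_nonpos (by linarith)]; linarith
        · rw [abs_of_pos (by linarith)]; linarith
      have : g t = 0 := by
        rw [hgdef]
        apply max_eq_left
        rw [sub_nonpos, le_div_iff₀ hr, one_mul]
        exact habs
      rw [this, zero_mul]
  rw [hfun, integral_indicator measurableSet_Ioc,
    ← intervalIntegral.integral_of_le (by linarith : -r ≤ r)]
  -- step 3: split the integral
  have hii1 : IntervalIntegrable pdf volume (-r) r := hpdfcont.intervalIntegrable _ _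
  have hii2 : IntervalIntegrable (fun t => pdf t * (|t| / r)) volume (-r) r :=
    (hpdfcont.mul ((continuous_abs).div_const r)).intervalIntegrable _ _
  have hsplit : ∫ t in (-r)..r, pdf t * (1 - |t| / r)
      = (∫ t in (-r)..r, pdf t) - ∫ t in (-r)..r, pdf t * (|t| / r) := by
    rw [← intervalIntegral.integral_sub hii1 hii2]
    apply intervalIntegral.integral_congr
    intro t _
    ring
  rw [hsplit]
  -- step 4: the first integral, via the standard normal CDF
  have hIic : ∀ c : ℝ, gaussianReal 0 v (Set.Iic c) = gaussianReal 0 1 (Set.Iic (c / θ)) := by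
    intro c
    have hmap : (gaussianReal 0 1).map (θ * ·) = gaussianReal 0 v := by
      rw [gaussianReal_map_const_mul θ]
      congr 1
      · exact mul_zero θ
      · exact mul_one _
    rw [← hmap, Measure.map_apply (measurable_const_mul θ) measurableSet_Iic]
    congr 1
    ext t
    simp only [Set.mem_preimage, Set.mem_Iic]
    rw [le_div_iff₀ hθ, mul_comm]
  have hA : (∫ t in (-r)..r, pdf t) = 1 - 2 * stdNormalCDF (-r / θ) := by
    have h1 : ENNReal.ofReal (∫ t in (-r)..r, pdf t) = gaussianReal 0 v (Set.Ioc (-r) r) := by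
      rw [intervalIntegral.integral_of_le (by linarith : -r ≤ r),
        gaussianReal_apply_eq_integral 0 hv]
    have h2 : gaussianReal 0 v (Set.Ioc (-r) r)
        = gaussianReal 0 v (Set.Iic r) - gaussianReal 0 v (Set.Iic (-r)) := by
      rw [← Set.Iic_sdiff_Iic,
        measure_diff (Set.Iic_subset_Iic.2 (by linarith)) measurableSet_Iic.nullMeasurableSet
          (measure_ne_top _ _)]
    have h3 : gaussianReal 0 1 (Set.Iic (r / θ))
        = 1 - gaussianReal 0 1 (Set.Iic (-r / θ)) := by
      rw [stdNormal_Iic_symm (r / θ), neg_div]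
    have hle : gaussianReal 0 v (Set.Iic (-r)) ≤ gaussianReal 0 v (Set.Iic r) :=
      measure_mono (Set.Iic_subset_Iic.2 (by linarith))
    have h4 : (∫ t in (-r)..r, pdf t) = (gaussianReal 0 v (Set.Ioc (-r) r)).toReal := by
      rw [← h1, ENNReal.toReal_ofReal]
      rw [intervalIntegral.integral_of_le (by linarith : -r ≤ r)]
      exact setIntegral_nonneg measurableSet_Ioc fun t _ => hpdfnn t
    rw [h4, h2, ENNReal.toReal_sub_of_le hle (measure_ne_top _ _)]
    rw [hIic, hIic, h3, neg_div]
    have hone : ((1 : ENNReal) - gaussianReal 0 1 (Set.Iic (-(r / θ)))).toReal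
        = 1 - (gaussianReal 0 1 (Set.Iic (-(r / θ)))).toReal := by
      rw [ENNReal.toReal_sub_of_le prob_le_one ENNReal.one_ne_top, ENNReal.toReal_one]
    rw [hone]
    unfold stdNormalCDF
    ring
  rw [hA]
  -- step 5: the second integral
  have hJ : ∫ t in (0:ℝ)..r, t * Real.exp (-t ^ 2 / (2 * θ ^ 2))
      = θ ^ 2 * (1 - Real.exp (-r ^ 2 / (2 * θ ^ 2))) := by
    have hder : ∀ t : ℝ, HasDerivAt (fun s : ℝ => -θ ^ 2 * Real.exp (-s ^ 2 / (2 * θ ^ 2)))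
        (t * Real.exp (-t ^ 2 / (2 * θ ^ 2))) t := by
      intro t
      have h1 : HasDerivAt (fun s : ℝ => -s ^ 2 / (2 * θ ^ 2)) (-t / θ ^ 2) t := by
        have h0 := ((hasDerivAt_pow 2 t).neg).div_const (2 * θ ^ 2)
        refine h0.congr_deriv ?_
        field_simp
        ring
      have h2 := (h1.exp).const_mul (-θ ^ 2)
      refine h2.congr_deriv ?_
      field_simp
    rw [intervalIntegral.integral_eq_sub_of_hasDerivAt (fun t _ => hder t)
      ((continuous_id.mul (by fun_prop)).intervalIntegrable _ _)]
    norm_num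
    ring
  have hB : ∫ t in (-r)..r, pdf t * (|t| / r)
      = (2 * θ / (Real.sqrt (2 * Real.pi) * r)) * (1 - Real.exp (-r ^ 2 / (2 * θ ^ 2))) := by
    have hsplit2 : ∫ t in (-r)..r, pdf t * |t|
        = (∫ t in (-r)..(0:ℝ), pdf t * |t|) + ∫ t in (0:ℝ)..r, pdf t * |t| := by
      rw [intervalIntegral.integral_add_adjacent_intervals (f := fun t => pdf t * |t|)
        ((hpdfcont.mul continuous_abs : Continuous fun t => pdf t * |t|).intervalIntegrable _ _)
        ((hpdfcont.mul continuous_abs : Continuous fun t => pdf t * |t|).intervalIntegrable _ _)]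
    have hleft : ∫ t in (-r)..(0:ℝ), pdf t * |t| = ∫ t in (0:ℝ)..r, pdf t * t := by
      have : ∫ t in (-r)..(0:ℝ), pdf t * |t|
          = ∫ t in (-r)..(0:ℝ), (fun s => pdf s * s) (-t) := by
        apply intervalIntegral.integral_congr
        intro t ht
        rw [Set.uIcc_of_le (by linarith : -r ≤ (0:ℝ))] at ht
        show pdf t * |t| = pdf (-t) * (-t)
        rw [hpdf_even, abs_of_nonpos ht.2]
      rw [this, intervalIntegral.integral_comp_neg (fun s => pdf s * s)]
      norm_num
    have hright : ∫ t in (0:ℝ)..r, pdf t * |t| = ∫ t in (0:ℝ)..r, pdf t * t := by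
      apply intervalIntegral.integral_congr
      intro t ht
      rw [Set.uIcc_of_le (by linarith : (0:ℝ) ≤ r)] at ht
      show pdf t * |t| = pdf t * t
      rw [abs_of_nonneg ht.1]
    have hmain : ∫ t in (0:ℝ)..r, pdf t * t
        = (Real.sqrt (2 * π * θ ^ 2))⁻¹ * (θ ^ 2 * (1 - Real.exp (-r ^ 2 / (2 * θ ^ 2)))) := by
      have : ∀ t : ℝ, pdf t * t
          = (Real.sqrt (2 * π * θ ^ 2))⁻¹ * (t * Real.exp (-t ^ 2 / (2 * θ ^ 2))) := by
        intro t
        rw [hpdf_eq]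
        ring
      simp_rw [this]
      rw [intervalIntegral.integral_const_mul, hJ]
    have hdivr : ∀ t : ℝ, pdf t * (|t| / r) = (pdf t * |t|) / r := fun t => by ring
    simp_rw [hdivr]
    rw [intervalIntegral.integral_div, hsplit2, hleft, hright, hmain]
    have hsqrt : Real.sqrt (2 * π * θ ^ 2) = Real.sqrt (2 * π) * θ := by
      rw [Real.sqrt_mul (by positivity), Real.sqrt_sq hθ.le]
    rw [hsqrt]
    have hs : (0:ℝ) < Real.sqrt (2 * π) := Real.sqrt_pos.2 (by positivity)
    field_simp
    ring
  rw [hB]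
  unfold collisionProb
  ring


/-- Collision probability of a p-stable LSH hash: for `a` with i.i.d. standard
Gaussian entries and `b` uniform on `[0, r]`, independent of `a`, the
probability that `⌊(a·x + b)/r⌋ = ⌊(a·y + b)/r⌋` equals `ε(θ)` with
`θ = ‖x − y‖₂`. -/
theorem pstable_lsh_collision_probability (n : ℕ) (x y : Fin n → ℝ) (hxy : x ≠ y)
    (r : ℝ) (hr : 0 < r) (θ : ℝ) (hθ : θ = Real.sqrt (∑ i, (x i - y i) ^ 2)) :
    ((Measure.pi fun _ : Fin n => gaussianReal 0 1).prod
        (ProbabilityTheory.cond volume (Set.Icc (0 : ℝ) r)))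
      {p : (Fin n → ℝ) × ℝ |
        ⌊(∑ i, p.1 i * x i + p.2) / r⌋ = ⌊(∑ i, p.1 i * y i + p.2) / r⌋}
      = ENNReal.ofReal (collisionProb r θ) := by
  classical
  set c : Fin n → ℝ := fun i => x i - y i with hc
  have hcne : c ≠ 0 := by
    intro h
    apply hxy
    funext i
    have := congrFun h i
    simpa [hc, sub_eq_zero] using this
  have hθ' : θ = Real.sqrt (∑ i, c i ^ 2) := hθ
  have hsum : 0 < ∑ i, c i ^ 2 := by
    obtain ⟨i, hi⟩ : ∃ i, c i ≠ 0 := by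
      by_contra hcon; push_neg at hcon; exact hcne (funext hcon)
    exact Finset.sum_pos' (fun j _ => sq_nonneg _) ⟨i, Finset.mem_univ i, by positivity⟩
  have hθpos : 0 < θ := hθ' ▸ Real.sqrt_pos.2 hsum
  set ν := ProbabilityTheory.cond volume (Set.Icc (0 : ℝ) r) with hν
  haveI hνprob : IsProbabilityMeasure ν := by
    apply ProbabilityTheory.cond_isProbabilityMeasure_of_finite
    · rw [Real.volume_Icc, sub_zero]
      exact ne_of_gt (ENNReal.ofReal_pos.2 hr)
    · rw [Real.volume_Icc]
      exact ENNReal.ofReal_ne_top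
  set S := {p : (Fin n → ℝ) × ℝ |
    ⌊(∑ i, p.1 i * x i + p.2) / r⌋ = ⌊(∑ i, p.1 i * y i + p.2) / r⌋} with hS
  have hm1 : Measurable fun p : (Fin n → ℝ) × ℝ => ⌊(∑ i, p.1 i * x i + p.2) / r⌋ :=
    (((Finset.measurable_sum _ fun i _ =>
      ((measurable_pi_apply i).comp measurable_fst :
        Measurable fun p : (Fin n → ℝ) × ℝ => p.1 i).mul_const (x i)).add
        measurable_snd).div_const r).floor
  have hm2 : Measurable fun p : (Fin n → ℝ) × ℝ => ⌊(∑ i, p.1 i * y i + p.2) / r⌋ :=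
    (((Finset.measurable_sum _ fun i _ =>
      ((measurable_pi_apply i).comp measurable_fst :
        Measurable fun p : (Fin n → ℝ) × ℝ => p.1 i).mul_const (y i)).add
        measurable_snd).div_const r).floor
  have hSmeas : MeasurableSet S := by
    have : S = ⋃ m : ℤ,
        ((fun p : (Fin n → ℝ) × ℝ => ⌊(∑ i, p.1 i * x i + p.2) / r⌋) ⁻¹' {m})
          ∩ ((fun p : (Fin n → ℝ) × ℝ => ⌊(∑ i, p.1 i * y i + p.2) / r⌋) ⁻¹' {m}) := by
      ext p
      simp only [hS, Set.mem_setOf_eq, Set.mem_iUnion, Set.mem_inter_iff, Set.mem_preimage,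
        Set.mem_singleton_iff]
      constructor
      · intro h; exact ⟨_, rfl, h.symm⟩
      · rintro ⟨m, h1, h2⟩; rw [h1, h2]
    rw [this]
    exact MeasurableSet.iUnion fun m =>
      (hm1 (measurableSet_singleton m)).inter (hm2 (measurableSet_singleton m))
  rw [Measure.prod_apply hSmeas]
  have hfiber : ∀ a : Fin n → ℝ, ν (Prod.mk a ⁻¹' S)
      = ENNReal.ofReal (max 0 (1 - |∑ i, a i * c i| / r)) := by
    intro a
    have hpre : Prod.mk a ⁻¹' S
        = {b : ℝ | ⌊((∑ i, a i * x i) + b) / r⌋ = ⌊((∑ i, a i * y i) + b) / r⌋} := rfl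
    rw [hpre, hν, cond_floorSet hr]
    have hdiff : (∑ i, a i * x i) - (∑ i, a i * y i) = ∑ i, a i * c i := by
      rw [← Finset.sum_sub_distrib]
      exact Finset.sum_congr rfl fun i _ => (mul_sub (a i) (x i) (y i)).symm
    rw [hdiff]
  calc ∫⁻ a, ν (Prod.mk a ⁻¹' S) ∂(Measure.pi fun _ : Fin n => gaussianReal 0 1)
      = ∫⁻ a, ENNReal.ofReal (max 0 (1 - |∑ i, a i * c i| / r))
          ∂(Measure.pi fun _ : Fin n => gaussianReal 0 1) := lintegral_congr hfiber
    _ = ∫⁻ t, ENNReal.ofReal (max 0 (1 - |t| / r))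
          ∂((Measure.pi fun _ : Fin n => gaussianReal 0 1).map (fun a => ∑ i, a i * c i)) := by
        rw [lintegral_map
          (Measurable.ennreal_ofReal (Measurable.max measurable_const
            (measurable_const.sub ((_root_.measurable_abs).div_const r))) :
            Measurable fun t : ℝ => ENNReal.ofReal (max 0 (1 - |t| / r)))
          (Finset.measurable_sum _ fun i _ =>
            (measurable_pi_apply i : Measurable fun a : Fin n → ℝ => a i).mul_const (c i) :
            Measurable fun a : Fin n → ℝ => ∑ i, a i * c i)]
    _ = ∫⁻ t, ENNReal.ofReal (max 0 (1 - |t| / r))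
          ∂(gaussianReal 0 ⟨θ ^ 2, sq_nonneg θ⟩) := by
        rw [map_sum_mul_pi_gaussian c hcne θ hθ']
    _ = ENNReal.ofReal (collisionProb r θ) := gaussian_lintegral_hat r θ hr hθpos
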